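/- On any reflexive, transitive, strongly convergent frame with constant domain D and predicate P : D → W → Prop, the formula [K^MS_FS] → [B][K^MS_FS] combined with consistency of belief yields: if [K^MS_FS] holds at w, then it is not the case that ¬[K^MS_FS] holds at all R_B-successors of w. Equivalently, [K^MS_FS]^x φ → ⟨B⟩[K^MS_FS]^x φ is valid on S4.2-constant-domain models. -/
import Mathlib

def RB {W : Type*} (R : W → W → Prop) (w u : W) : Prop := ∀ v, R w v → R v u

theorem KMSFS_to_diaB_KMSFS {W : Type*} [Nonempty W] {D : Type*} [Nonempty D]
    (R : W → W → Prop) (P : D → W → Prop)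
    (hrefl : ∀ w, R w w) (htrans : ∀ w v u, R w v → R v u → R w u)
    (hconv : ∀ w, ∃ u, ∀ v, R w v → R v u)
    (w : W)
    (h : (∃ a, ∀ v, R w v → P a v) ∧ (∀ b, (∀ u, RB R w u → P b u) → P b w)) :
    ∃ v, RB R w v ∧
      ((∃ a, ∀ x, R v x → P a x) ∧ (∀ b, (∀ u, RB R v u → P b u) → P b v)) := by
  obtain ⟨u, hu⟩ := hconv w
  have hRwu : R w u := hu w (hrefl w)
  refine ⟨u, hu, ?_, ?_⟩
  · obtain ⟨a, ha⟩ := h.1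
    exact ⟨a, fun x hux => ha x (htrans w u x hRwu hux)⟩
  · intro b hb
    exact hb u (fun v huv => hu v (htrans w u v hRwu huv))
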